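/- Let r ≥ 2, n ≥ k ≥ 2, t ≥ 1, 1 ≤ s < r, and n ≥ tk. Then the s-disjoint r-colorability defect of the hypergraph of t-stable k-subsets of [n] equals max{ns - tr(k-1), 0}. -/

import Mathlib

open Finset

private lemma mul_pred_aux (t k : ℕ) (hk : 1 ≤ k) : t * (k - 1) + t = t * k := by
  cases k with
  | zero => omega
  | succ k => simp [Nat.mul_succ]

private lemma ap_card (t k a : ℕ) (ht : 1 ≤ t) :
    ((range k).image (fun i => a + i * t)).card = k := by
  rw [Finset.card_image_of_injOn, Finset.card_range]
  intro i _ j _ h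
  simp only at h
  have h' : i * t = j * t := by omega
  exact Nat.eq_of_mul_eq_mul_right ht h'

private lemma ap_stab (t k n a : ℕ) (ht : 1 ≤ t) (hwrap : (k - 1) * t + t ≤ n) :
    ∀ x ∈ (range k).image (fun i => a + i * t), ∀ y ∈ (range k).image (fun i => a + i * t),
      x ≠ y → t ≤ Nat.dist x y ∧ Nat.dist x y ≤ n - t := by
  have key : ∀ i j : ℕ, i < j → j < k →
      t ≤ Nat.dist (a + i * t) (a + j * t) ∧ Nat.dist (a + i * t) (a + j * t) ≤ n - t := by
    intro i j hij hj
    have h1 : i * t + t ≤ j * t := by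
      calc i * t + t = (i + 1) * t := by ring
      _ ≤ j * t := mul_le_mul_left hij t
    have h2 : j * t ≤ (k - 1) * t := mul_le_mul_left (by omega) t
    have hd : Nat.dist (a + i * t) (a + j * t) = j * t - i * t := by
      simp [Nat.dist]; omega
    omega
  intro x hx y hy hxy
  simp only [mem_image, mem_range] at hx hy
  obtain ⟨i, hi, rfl⟩ := hx
  obtain ⟨j, hj, rfl⟩ := hy
  rcases Nat.lt_trichotomy i j with h | h | h
  · exact key i j h hj
  · exact absurd (by rw [h]) hxy
  · rw [Nat.dist_comm]; exact key j i h hi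

private lemma exists_stable (t k : ℕ) (ht : 1 ≤ t) (hk : 1 ≤ k) :
    ∀ n, t * k ≤ n → ∀ R : Finset ℕ, R ⊆ Icc 1 n → t * (k - 1) + 1 ≤ R.card →
    ∃ S : Finset ℕ, S ⊆ R ∧ S.card = k ∧
      ∀ a ∈ S, ∀ b ∈ S, a ≠ b → t ≤ Nat.dist a b ∧ Nat.dist a b ≤ n - t := by
  intro n hn
  induction n, hn using Nat.le_induction with
  | base =>
    intro R hR hcard
    have h2 := mul_pred_aux t k hk
    have h3 : (k - 1) * t = t * (k - 1) := Nat.mul_comm _ _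
    by_cases hfull : ∃ a ∈ Icc 1 t, ∀ i ∈ range k, a + i * t ∈ R
    · obtain ⟨a, ha, hmem⟩ := hfull
      simp only [mem_Icc] at ha
      refine ⟨(range k).image (fun i => a + i * t), ?_, ap_card t k a ht, ?_⟩
      · intro x hx
        simp only [mem_image, mem_range] at hx
        obtain ⟨i, hi, rfl⟩ := hx
        exact hmem i (mem_range.mpr hi)
      · exact ap_stab t k (t * k) a ht (by omega)
    · push_neg at hfull
      exfalso
      have hfull' : ∀ a : ℕ, ∃ i : ℕ, a ∈ Icc 1 t → i ∈ range k ∧ a + i * t ∉ R := by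
        intro a
        by_cases h : a ∈ Icc 1 t
        · obtain ⟨i, hi1, hi2⟩ := hfull a h
          exact ⟨i, fun _ => ⟨hi1, hi2⟩⟩
        · exact ⟨0, fun h' => absurd h' h⟩
      choose f hf using hfull'
      have hcard2 : (Icc 1 t).card ≤ ((Icc 1 (t * k)) \ R).card := by
        apply Finset.card_le_card_of_injOn (fun a => a + f a * t)
        · intro a ha
          obtain ⟨hfr, hfnR⟩ := hf a ha
          simp only [mem_coe, mem_Icc] at ha
          simp only [mem_range] at hfr
          simp only [mem_coe, mem_sdiff, mem_Icc]
          have hft : f a * t ≤ (k - 1) * t := mul_le_mul_left (by omega) t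
          exact ⟨⟨by omega, by omega⟩, hfnR⟩
        · intro a1 h1 a2 h2 heq
          simp only [coe_Icc, Set.mem_Icc] at h1 h2
          simp only at heq
          rcases Nat.lt_trichotomy (f a1) (f a2) with h | h | h
          · have : f a1 * t + t ≤ f a2 * t := by
              calc f a1 * t + t = (f a1 + 1) * t := by ring
              _ ≤ f a2 * t := mul_le_mul_left h t
            omega
          · rw [h] at heq; omega
          · have : f a2 * t + t ≤ f a1 * t := by
              calc f a2 * t + t = (f a2 + 1) * t := by ring
              _ ≤ f a1 * t := mul_le_mul_left h t
            omega
      have hD : ((Icc 1 (t * k)) \ R).card = (Icc 1 (t * k)).card - R.card :=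
        Finset.card_sdiff_of_subset hR
      have hR' : R.card ≤ (Icc 1 (t * k)).card := Finset.card_le_card hR
      rw [Nat.card_Icc] at hcard2 hD hR'
      omega
  | succ n hn ih =>
    intro R hR hcard
    have h2 := mul_pred_aux t k hk
    have h3 : (k - 1) * t = t * (k - 1) := Nat.mul_comm _ _
    by_cases hfull : Icc 1 (n + 1) ⊆ R
    · refine ⟨(range k).image (fun i => 1 + i * t), ?_, ap_card t k 1 ht, ?_⟩
      · intro x hx
        apply hfull
        simp only [mem_image, mem_range] at hx
        obtain ⟨i, hi, rfl⟩ := hx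
        have : i * t ≤ (k - 1) * t := mul_le_mul_left (by omega) t
        simp only [mem_Icc]
        omega
      · exact ap_stab t k (n + 1) 1 ht (by omega)
    · have hex : ∃ z ∈ Icc 1 (n + 1), z ∉ R := by
        by_contra h
        push_neg at h
        exact hfull h
      obtain ⟨z, hz, hzR⟩ := hex
      simp only [mem_Icc] at hz
      set φ : ℕ → ℕ := fun x => if z < x then x - 1 else x with hφ
      have hmemR : ∀ x ∈ R, 1 ≤ x ∧ x ≤ n + 1 ∧ x ≠ z := by
        intro x hx
        have hx' := hR hx
        simp only [mem_Icc] at hx'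
        exact ⟨hx'.1, hx'.2, fun h => hzR (h ▸ hx)⟩
      have hinjφ : Set.InjOn φ R := by
        intro x hx y hy heq
        obtain ⟨_, _, hxz⟩ := hmemR x hx
        obtain ⟨_, _, hyz⟩ := hmemR y hy
        simp only [hφ] at heq
        split_ifs at heq <;> omega
      have hsub' : R.image φ ⊆ Icc 1 n := by
        intro x hx
        simp only [mem_image] at hx
        obtain ⟨y, hy, rfl⟩ := hx
        obtain ⟨h1, h2', h3'⟩ := hmemR y hy
        simp only [hφ, mem_Icc]
        split_ifs <;> omega
      have hcard' : t * (k - 1) + 1 ≤ (R.image φ).card := by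
        rw [Finset.card_image_of_injOn hinjφ]; exact hcard
      obtain ⟨S', hS'sub, hS'card, hS'stab⟩ := ih (R.image φ) hsub' hcard'
      set ψ : ℕ → ℕ := fun x => if z ≤ x then x + 1 else x with hψ
      have hψinj : ∀ x y, ψ x = ψ y → x = y := by
        intro x y h; simp only [hψ] at h; split_ifs at h <;> omega
      refine ⟨S'.image ψ, ?_, ?_, ?_⟩
      · intro x hx
        simp only [mem_image] at hx
        obtain ⟨y, hy, rfl⟩ := hx
        have hyR' := hS'sub hy
        simp only [mem_image] at hyR'
        obtain ⟨w, hw, rfl⟩ := hyR'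
        obtain ⟨h1', h2', h3'⟩ := hmemR w hw
        have hcomp : ψ (φ w) = w := by
          simp only [hφ, hψ]
          split_ifs <;> omega
        rw [hcomp]; exact hw
      · rw [Finset.card_image_of_injOn (fun x _ y _ h => hψinj x y h)]
        exact hS'card
      · intro x hx y hy hxy
        simp only [mem_image] at hx hy
        obtain ⟨x', hx', rfl⟩ := hx
        obtain ⟨y', hy', rfl⟩ := hy
        have hxy' : x' ≠ y' := fun h => hxy (by rw [h])
        have hst := hS'stab x' hx' y' hy' hxy'
        simp only [Nat.dist] at hst ⊢
        simp only [hψ]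
        split_ifs <;> omega


private lemma sum_sub_telescope (g : ℕ → ℕ) (hg : Monotone g) (r : ℕ) :
    ∑ j ∈ range r, (g (j + 1) - g j) = g r - g 0 := by
  induction r with
  | zero => simp
  | succ r ih =>
    rw [Finset.sum_range_succ, ih]
    have h1 : g 0 ≤ g r := hg (by omega)
    have h2 : g r ≤ g (r + 1) := hg (by omega)
    omega

private lemma hinj_mod (n : ℕ) (hn0 : 0 < n) :
    ∀ a b : ℕ, a ≤ b → b < a + n → a % n = b % n → a = b := by
  intro a b hab hlt hmod
  have hdvd : n ∣ b - a := (Nat.modEq_iff_dvd' hab).mp hmod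
  rcases Nat.eq_zero_or_pos (b - a) with h | h
  · omega
  · have := Nat.le_of_dvd h hdvd; omega

set_option maxHeartbeats 1000000 in
/-- **Lemma 2 (s-disjoint r-colorability defect of t-stable k-subsets).**
For `r ≥ 2`, `n ≥ k ≥ 2`, `t ≥ 1`, `1 ≤ s < r` and `n ≥ tk`:
`cd^r_s ([n] choose k)_{t-stab} = max (ns - tr(k-1)) 0` (natural subtraction is
truncated, so the right-hand side is `n*s - t*r*(k-1)` in `ℕ`).
A set `S ⊆ [n]` is `t`-stable iff any two distinct elements are at cyclic distance
at least `t`, i.e. `t ≤ |a-b| ≤ n - t`. -/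
theorem cd_t_stable (n r k t s : ℕ) (hr : 2 ≤ r) (hk : 2 ≤ k) (hkn : k ≤ n)
    (ht : 1 ≤ t) (hs1 : 1 ≤ s) (hsr : s < r) (htk : t * k ≤ n) :
    n * s - sSup {m : ℕ | ∃ R : Fin r → Finset ℕ,
        (∀ j, R j ⊆ Icc 1 n) ∧
        (∀ i ∈ Icc 1 n, (Finset.univ.filter fun j => i ∈ R j).card ≤ s) ∧
        (∀ j, ∀ S : Finset ℕ, S ⊆ Icc 1 n → S.card = k →
            (∀ a ∈ S, ∀ b ∈ S, a ≠ b → t ≤ Nat.dist a b ∧ Nat.dist a b ≤ n - t) →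
            ¬ S ⊆ R j) ∧
        m = ∑ j, (R j).card} = n * s - t * r * (k - 1) := by
  have hn0 : 0 < n := by omega
  have hk1 : 1 ≤ k := by omega
  have hmp := mul_pred_aux t k hk1
  set L := t * (k - 1) with hLdef
  have hLn : L + t ≤ n := by omega
  set M0 := min (n * s) (r * L) with hM0def
  set c : ℕ → ℕ := fun j => min (j * L) M0 with hcdef
  have hcmono : Monotone c := fun a b hab => min_le_min (mul_le_mul_left hab L) le_rfl
  have hcstep : ∀ j : ℕ, c (j + 1) ≤ c j + L := by
    intro j
    simp only [hcdef]
    have h' : (j + 1) * L = j * L + L := by ring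
    omega
  have hcle : ∀ j : ℕ, c j ≤ M0 := fun j => min_le_right _ _
  set SS := {m : ℕ | ∃ R : Fin r → Finset ℕ,
        (∀ j, R j ⊆ Icc 1 n) ∧
        (∀ i ∈ Icc 1 n, (Finset.univ.filter fun j => i ∈ R j).card ≤ s) ∧
        (∀ j, ∀ S : Finset ℕ, S ⊆ Icc 1 n → S.card = k →
            (∀ a ∈ S, ∀ b ∈ S, a ≠ b → t ≤ Nat.dist a b ∧ Nat.dist a b ≤ n - t) →
            ¬ S ⊆ R j) ∧
        m = ∑ j, (R j).card} with hSSdef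
  have hub : ∀ m ∈ SS, m ≤ M0 := by
    intro m hm
    rw [hSSdef] at hm
    obtain ⟨R, hRsub, hRmult, hRfree, rfl⟩ := hm
    have h1 : ∀ j, (R j).card ≤ L := by
      intro j
      by_contra hcgt
      push_neg at hcgt
      obtain ⟨S, hSR, hScard, hSstab⟩ :=
        exists_stable t k ht hk1 n htk (R j) (hRsub j) (by omega)
      exact hRfree j S (hSR.trans (hRsub j)) hScard hSstab hSR
    have hsum1 : ∑ j, (R j).card ≤ r * L := by
      calc ∑ j : Fin r, (R j).card ≤ ∑ _j : Fin r, L := Finset.sum_le_sum fun j _ => h1 j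
        _ = r * L := by simp [Finset.sum_const, Finset.card_univ, mul_comm]
    have hsum2 : ∑ j, (R j).card ≤ n * s := by
      have heach : ∀ j : Fin r, (R j).card = ∑ i ∈ Icc 1 n, if i ∈ R j then 1 else 0 := by
        intro j
        have hfe : (Icc 1 n).filter (· ∈ R j) = R j := by
          ext x
          simp only [mem_filter]
          exact ⟨fun h => h.2, fun h => ⟨hRsub j h, h⟩⟩
        conv_lhs => rw [← hfe]
        exact Finset.card_filter _ _
      calc ∑ j : Fin r, (R j).card
          = ∑ j : Fin r, ∑ i ∈ Icc 1 n, (if i ∈ R j then 1 else 0) :=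
            Finset.sum_congr rfl fun j _ => heach j
        _ = ∑ i ∈ Icc 1 n, ∑ j : Fin r, (if i ∈ R j then 1 else 0) := Finset.sum_comm
        _ ≤ ∑ _i ∈ Icc 1 n, s := Finset.sum_le_sum (fun i hi => by
              rw [← Finset.card_filter]
              exact hRmult i hi)
        _ = n * s := by
              rw [Finset.sum_const, Nat.card_Icc, smul_eq_mul]
              congr 1
    exact le_min hsum2 hsum1
  have hmem : M0 ∈ SS := by
    rw [hSSdef]
    refine ⟨fun j => (Ico (c (j : ℕ)) (c ((j : ℕ) + 1))).image (fun q => q % n + 1),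
      ?_, ?_, ?_, ?_⟩
    · intro j x hx
      simp only [mem_image] at hx
      obtain ⟨q, _, rfl⟩ := hx
      have := Nat.mod_lt q hn0
      simp only [mem_Icc]
      omega
    · intro i hi
      simp only [mem_Icc] at hi
      have hex : ∀ j : Fin r, ∃ q : ℕ,
          i ∈ (Ico (c (j : ℕ)) (c ((j : ℕ) + 1))).image (fun q => q % n + 1) →
          q ∈ Ico (c (j : ℕ)) (c ((j : ℕ) + 1)) ∧ q % n + 1 = i := by
        intro j
        by_cases h : i ∈ (Ico (c (j : ℕ)) (c ((j : ℕ) + 1))).image (fun q => q % n + 1)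
        · simp only [mem_image] at h
          obtain ⟨q, hq1, hq2⟩ := h
          exact ⟨q, fun _ => ⟨hq1, hq2⟩⟩
        · exact ⟨0, fun h' => absurd h' h⟩
      choose g hg using hex
      have hcard : (univ.filter fun j : Fin r =>
          i ∈ (Ico (c (j : ℕ)) (c ((j : ℕ) + 1))).image (fun q => q % n + 1)).card
          ≤ (range s).card := by
        apply Finset.card_le_card_of_injOn (fun j => g j / n)
        · intro j hj
          simp only [mem_coe, mem_filter, mem_univ, true_and] at hj
          obtain ⟨hq, _⟩ := hg j hj
          simp only [mem_Ico] at hq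
          have h1 : g j < n * s := lt_of_lt_of_le hq.2 (le_trans (hcle _) (min_le_left _ _))
          exact mem_range.mpr (Nat.div_lt_of_lt_mul h1)
        · intro j1 hj1 j2 hj2 heq
          simp only [coe_filter, Set.mem_setOf_eq, mem_univ, true_and] at hj1 hj2
          obtain ⟨hq1, hi1⟩ := hg j1 hj1
          obtain ⟨hq2, hi2⟩ := hg j2 hj2
          simp only [mem_Ico] at hq1 hq2
          simp only at heq
          have hmodeq : g j1 % n = g j2 % n := by omega
          have hgeq : g j1 = g j2 := by
            have e1 := Nat.div_add_mod (g j1) n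
            have e2 := Nat.div_add_mod (g j2) n
            rw [heq] at e1
            omega
          by_contra hne
          rcases Nat.lt_or_ge (j1 : ℕ) (j2 : ℕ) with h | h
          · have hcc : c ((j1:ℕ)+1) ≤ c (j2:ℕ) := hcmono (by omega)
            omega
          · have hlt : (j2:ℕ) < (j1:ℕ) := by
              rcases Nat.lt_or_ge (j2:ℕ) (j1:ℕ) with h'|h'
              · exact h'
              · exact absurd (Fin.ext (by omega)) hne
            have hcc : c ((j2:ℕ)+1) ≤ c (j1:ℕ) := hcmono (by omega)
            omega
      rwa [Finset.card_range] at hcard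
    · intro j S hSIcc hScard hSstab hSsub
      have hstep := hcstep (j : ℕ)
      have hex : ∀ x : ℕ, ∃ q : ℕ, x ∈ S →
          q ∈ Ico (c (j : ℕ)) (c ((j : ℕ) + 1)) ∧ q % n + 1 = x := by
        intro x
        by_cases h : x ∈ S
        · have hx' := hSsub h
          simp only [mem_image] at hx'
          obtain ⟨q, hq1, hq2⟩ := hx'
          exact ⟨q, fun _ => ⟨hq1, hq2⟩⟩
        · exact ⟨0, fun h' => absurd h' h⟩
      choose g hg using hex
      have hmono2 : ∀ x ∈ S, ∀ y ∈ S, g x < g y →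
          (g x - c (j:ℕ)) / t + 1 ≤ (g y - c (j:ℕ)) / t := by
        intro x hx y hy hlt
        obtain ⟨hqx, hex1⟩ := hg x hx
        obtain ⟨hqy, hey1⟩ := hg y hy
        simp only [mem_Ico] at hqx hqy
        have hxy : x ≠ y := by
          intro hcon
          have hmeq : g x % n = g y % n := by omega
          have : g x = g y := hinj_mod n hn0 _ _ (le_of_lt hlt) (by omega) hmeq
          omega
        have hstab := hSstab x hx y hy hxy
        set d := g y - g x with hd
        have hdn : d < n := by omega
        have hd1 : 1 ≤ d := by omega
        have hpy : g y % n = (g x % n + d) % n := by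
          conv_lhs => rw [show g y = g x + d by omega]
          rw [Nat.add_mod, Nat.mod_eq_of_lt hdn]
        have hpxlt : g x % n < n := Nat.mod_lt _ hn0
        have hpylt : g y % n < n := Nat.mod_lt _ hn0
        have hcase : g y % n = g x % n + d ∨ g x % n + d = g y % n + n := by
          rcases Nat.lt_or_ge (g x % n + d) n with h | h
          · left; rw [hpy, Nat.mod_eq_of_lt h]
          · right
            have hmm : (g x % n + d) % n = g x % n + d - n := by
              rw [Nat.mod_eq_sub_mod h, Nat.mod_eq_of_lt (by omega)]
            omega
        have htd : t ≤ d := by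
          simp only [Nat.dist] at hstab
          rcases hcase with h | h <;> omega
        have hstep2 : g x - c (j:ℕ) + t ≤ g y - c (j:ℕ) := by omega
        calc (g x - c (j:ℕ)) / t + 1 = (g x - c (j:ℕ) + t) / t :=
              (Nat.add_div_right _ (by omega)).symm
          _ ≤ (g y - c (j:ℕ)) / t := Nat.div_le_div_right hstep2
      have hmap : ∀ x ∈ S, (g x - c (j:ℕ)) / t ∈ range (k - 1) := by
        intro x hx
        obtain ⟨hqx, _⟩ := hg x hx
        simp only [mem_Ico] at hqx
        simp only [mem_range]
        rw [Nat.div_lt_iff_lt_mul (by omega : 0 < t)]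
        have h3 : (k - 1) * t = t * (k - 1) := Nat.mul_comm _ _
        omega
      have hinj2 : Set.InjOn (fun x => (g x - c (j:ℕ)) / t) S := by
        intro x hx y hy heq
        replace hx := mem_coe.mp hx
        replace hy := mem_coe.mp hy
        simp only at heq
        by_contra hne
        have hgne : g x ≠ g y := by
          intro h
          obtain ⟨_, hex1⟩ := hg x hx
          obtain ⟨_, hey1⟩ := hg y hy
          rw [h] at hex1
          omega
        rcases Nat.lt_or_ge (g x) (g y) with h | h
        · have := hmono2 x hx y hy h; omega
        · have := hmono2 y hy x hx (by omega); omega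
      have hcard2 := Finset.card_le_card_of_injOn _ hmap hinj2
      rw [hScard, Finset.card_range] at hcard2
      omega
    · have hcardj : ∀ j : Fin r,
          ((Ico (c (j:ℕ)) (c ((j:ℕ) + 1))).image (fun q => q % n + 1)).card
            = c ((j:ℕ) + 1) - c (j:ℕ) := by
        intro j
        rw [Finset.card_image_of_injOn, Nat.card_Ico]
        intro q1 h1 q2 h2 heq
        simp only [coe_Ico, Set.mem_Ico] at h1 h2
        have hstep := hcstep (j:ℕ)
        simp only at heq
        have hmod : q1 % n = q2 % n := by omega
        rcases le_total q1 q2 with h | h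
        · exact hinj_mod n hn0 q1 q2 h (by omega) hmod
        · exact (hinj_mod n hn0 q2 q1 h (by omega) hmod.symm).symm
      have hsum : (∑ j : Fin r,
          ((Ico (c (j:ℕ)) (c ((j:ℕ) + 1))).image (fun q => q % n + 1)).card) = M0 := by
        calc ∑ j : Fin r, ((Ico (c (j:ℕ)) (c ((j:ℕ) + 1))).image (fun q => q % n + 1)).card
            = ∑ j : Fin r, (c ((j:ℕ) + 1) - c (j:ℕ)) :=
              Finset.sum_congr rfl fun j _ => hcardj j
          _ = ∑ j ∈ range r, (c (j + 1) - c j) := Fin.sum_univ_eq_sum_range (fun j => c (j + 1) - c j) r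
          _ = c r - c 0 := sum_sub_telescope c hcmono r
          _ = M0 := by
              have h1 : M0 ≤ r * L := min_le_right _ _
              simp only [hcdef]
              rw [min_eq_right h1]
              simp
      exact hsum.symm
  have hbdd : BddAbove SS := ⟨M0, fun m hm => hub m hm⟩
  have hsup : sSup SS = M0 := le_antisymm (csSup_le ⟨M0, hmem⟩ hub) (le_csSup hbdd hmem)
  rw [hsup]
  have hrL : r * L = t * r * (k - 1) := by rw [hLdef]; ring
  rcases le_total (n * s) (r * L) with h | h
  · rw [hM0def, min_eq_left h]; omega
  · rw [hM0def, min_eq_right h]; omega
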